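/- Let ℏ > 0. Let U : ℝ² → ℂ be measurable with ∫_{ℝ²} ‖k'‖² |U(k')| dk' < ∞. Let g : ℝ²×ℝ² → ℂ be Lebesgue integrable, let η : ℝ² → ℂ be measurable and bounded, and let φ : ℝ² → ℂ be twice continuously differentiable with M := sup_{k∈ℝ²} ‖D²φ(k)‖ < ∞ (operator norm of the second derivative as a bilinear map). Then the Hartree-type Taylor-remainder pairing obeys the bound: | ∫_{ℝ²} U(k') ∫_{ℝ²}∫_{ℝ²} e^{i k'·x} g(x,k) η(x) · (1/ℏ) [ φ(k − (ℏ/2)k') − φ(k + (ℏ/2)k') + ℏ (k'·∇φ(k)) ] dx dk dk' | ≤ (ℏ/4) · ( ∫_{ℝ²} ‖k'‖² |U(k')| dk' ) · ‖g‖_{L¹} · ‖η‖_{∞} · M. -/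

import Mathlib

open MeasureTheory Complex

noncomputable section

variable {E : Type*} [NormedAddCommGroup E] [InnerProductSpace ℝ E]

lemma fderiv_lipschitz {φ : E → ℂ} (hφ : ContDiff ℝ 2 φ) {M : ℝ}
    (hM : ∀ q : E, ‖iteratedFDeriv ℝ 2 φ q‖ ≤ M) (a b : E) :
    ‖fderiv ℝ φ a - fderiv ℝ φ b‖ ≤ M * ‖a - b‖ := by
  have hdiff : Differentiable ℝ (fderiv ℝ φ) :=
    (hφ.fderiv_right (m := 1) (le_refl _)).differentiable one_ne_zero
  have hb : ∀ y : E, ‖fderiv ℝ (fderiv ℝ φ) y‖ ≤ M := by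
    intro y
    have h1 : ‖fderiv ℝ (fderiv ℝ φ) y‖ = ‖iteratedFDeriv ℝ 2 φ y‖ := by
      calc ‖fderiv ℝ (fderiv ℝ φ) y‖
          = ‖iteratedFDeriv ℝ 0 (fderiv ℝ (fderiv ℝ φ)) y‖ := (norm_iteratedFDeriv_zero (f := fderiv ℝ (fderiv ℝ φ)) (x := y)).symm
        _ = ‖iteratedFDeriv ℝ 1 (fderiv ℝ φ) y‖ := norm_iteratedFDeriv_fderiv
        _ = ‖iteratedFDeriv ℝ 2 φ y‖ := norm_iteratedFDeriv_fderiv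
    rw [h1]; exact hM y
  have := (convex_univ (𝕜 := ℝ) (E := E)).norm_image_sub_le_of_norm_fderiv_le
    (fun x _ => hdiff x) (fun x _ => hb x) (Set.mem_univ b) (Set.mem_univ a)
  simpa using this

lemma taylor2_bound {φ : E → ℂ} (hφ : ContDiff ℝ 2 φ) {M : ℝ}
    (hM : ∀ q : E, ‖iteratedFDeriv ℝ 2 φ q‖ ≤ M) (x v : E) :
    ‖φ (x + v) - φ x - fderiv ℝ φ x v‖ ≤ M / 2 * ‖v‖ ^ 2 := by
  have hdφ : Differentiable ℝ φ := hφ.differentiable two_ne_zero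
  have hline : ∀ t : ℝ, HasDerivAt (fun t : ℝ => φ (x + t • v))
      (fderiv ℝ φ (x + t • v) v) t := by
    intro t
    have h1 : HasDerivAt (fun t : ℝ => x + t • v) v t := by
      simpa using ((hasDerivAt_id t).smul_const v).const_add x
    exact ((hdφ (x + t • v)).hasFDerivAt.comp_hasDerivAt t h1)
  have hcont : Continuous fun t : ℝ => fderiv ℝ φ (x + t • v) v := by
    have : Continuous fun t : ℝ => fderiv ℝ φ (x + t • v) :=
      (hφ.continuous_fderiv two_ne_zero).comp (by continuity)
    exact this.clm_apply continuous_const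
  have hFTC : ∫ t in (0:ℝ)..1, fderiv ℝ φ (x + t • v) v =
      φ (x + v) - φ x := by
    have := intervalIntegral.integral_eq_sub_of_hasDerivAt
      (f := fun t : ℝ => φ (x + t • v)) (fun t _ => hline t)
      (hcont.intervalIntegrable 0 1)
    simpa using this
  have hconst : ∫ t in (0:ℝ)..1, fderiv ℝ φ x v = fderiv ℝ φ x v := by simp
  have hsub : φ (x + v) - φ x - fderiv ℝ φ x v =
      ∫ t in (0:ℝ)..1, (fderiv ℝ φ (x + t • v) v - fderiv ℝ φ x v) := by
    rw [intervalIntegral.integral_sub (hcont.intervalIntegrable 0 1)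
      (intervalIntegrable_const), hFTC, hconst]
  rw [hsub]
  have hbound : ∀ t ∈ Set.Ioc (0:ℝ) 1,
      ‖fderiv ℝ φ (x + t • v) v - fderiv ℝ φ x v‖ ≤ M * ‖v‖ ^ 2 * t := by
    intro t ht
    have h1 : ‖fderiv ℝ φ (x + t • v) v - fderiv ℝ φ x v‖
        ≤ ‖fderiv ℝ φ (x + t • v) - fderiv ℝ φ x‖ * ‖v‖ := by
      have := (fderiv ℝ φ (x + t • v) - fderiv ℝ φ x).le_opNorm v
      simpa using this
    have h2 : ‖fderiv ℝ φ (x + t • v) - fderiv ℝ φ x‖ ≤ M * (t * ‖v‖) := by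
      have := fderiv_lipschitz hφ hM (x + t • v) x
      simpa [norm_smul, abs_of_pos ht.1] using this
    calc ‖fderiv ℝ φ (x + t • v) v - fderiv ℝ φ x v‖
        ≤ M * (t * ‖v‖) * ‖v‖ := h1.trans (by
          apply mul_le_mul_of_nonneg_right h2 (norm_nonneg v))
      _ = M * ‖v‖ ^ 2 * t := by ring
  have hae : ∀ᵐ t ∂(MeasureTheory.volume.restrict (Set.uIoc (0:ℝ) 1)),
      ‖fderiv ℝ φ (x + t • v) v - fderiv ℝ φ x v‖ ≤ M * ‖v‖ ^ 2 * t := by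
    rw [Set.uIoc_of_le (zero_le_one)]
    exact (ae_restrict_iff' measurableSet_Ioc).2 (.of_forall hbound)
  have := intervalIntegral.norm_integral_le_of_norm_le (μ := MeasureTheory.volume)
    (f := fun t => fderiv ℝ φ (x + t • v) v - fderiv ℝ φ x v) zero_le_one (.of_forall hbound)
    (by apply Continuous.intervalIntegrable; continuity)
  have hval : ∫ t in (0:ℝ)..1, M * ‖v‖ ^ 2 * t = M * ‖v‖ ^ 2 * (1 / 2) := by
    rw [intervalIntegral.integral_const_mul]
    simp [integral_id]
  have hM0 : 0 ≤ M := le_trans (norm_nonneg _) (hM x)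
  calc ‖∫ t in (0:ℝ)..1, (fderiv ℝ φ (x + t • v) v - fderiv ℝ φ x v)‖
      ≤ |∫ t in (0:ℝ)..1, M * ‖v‖ ^ 2 * t| := this.trans (le_abs_self _)
    _ = M / 2 * ‖v‖ ^ 2 := by rw [hval, _root_.abs_of_nonneg (by positivity)]; ring

/-- Weak-form error estimate for the Hartree-type interaction term:
for measurable `U` with `∫ ‖k'‖²|U(k')| dk' < ∞`, integrable `g`, bounded measurable
`η`, and `φ ∈ C²` with `‖D²φ‖ ≤ M`, the pairing against the second-order symmetric
Taylor remainder of `φ` is bounded by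
`(ℏ/4) (∫ ‖k'‖²|U(k')| dk') ‖g‖_{L¹} ‖η‖_∞ M`. -/
theorem hartree_remainder_bound (ℏ : ℝ) (hℏ : 0 < ℏ)
    (U : EuclideanSpace ℝ (Fin 2) → ℂ) (hUmeas : Measurable U)
    (hU : Integrable fun k' : EuclideanSpace ℝ (Fin 2) => ‖k'‖ ^ 2 * ‖U k'‖)
    (g : EuclideanSpace ℝ (Fin 2) × EuclideanSpace ℝ (Fin 2) → ℂ)
    (hg : Integrable g)
    (η : EuclideanSpace ℝ (Fin 2) → ℂ) (hη : Measurable η)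
    (Cη : ℝ) (hCη : ∀ x, ‖η x‖ ≤ Cη)
    (φ : EuclideanSpace ℝ (Fin 2) → ℂ) (hφ : ContDiff ℝ 2 φ)
    (M : ℝ) (hM : ∀ q : EuclideanSpace ℝ (Fin 2), ‖iteratedFDeriv ℝ 2 φ q‖ ≤ M) :
    ‖∫ k' : EuclideanSpace ℝ (Fin 2), U k' *
        ∫ p : EuclideanSpace ℝ (Fin 2) × EuclideanSpace ℝ (Fin 2),
          Complex.exp (Complex.I * ((inner ℝ k' p.1 : ℝ) : ℂ)) *
            g p * η p.1 * (1 / (ℏ : ℂ)) *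
            (φ (p.2 - (ℏ / 2) • k') - φ (p.2 + (ℏ / 2) • k')
              + (ℏ : ℂ) * fderiv ℝ φ p.2 k')‖ ≤
      (ℏ / 4) * (∫ k' : EuclideanSpace ℝ (Fin 2), ‖k'‖ ^ 2 * ‖U k'‖) *
        (∫ p : EuclideanSpace ℝ (Fin 2) × EuclideanSpace ℝ (Fin 2), ‖g p‖) * Cη * M := by
  have hCη0 : 0 ≤ Cη := le_trans (norm_nonneg _) (hCη 0)
  have hM0 : 0 ≤ M := le_trans (norm_nonneg _) (hM 0)
  -- pointwise bound on the remainder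
  have hrem : ∀ (k' k : EuclideanSpace ℝ (Fin 2)),
      ‖φ (k - (ℏ / 2) • k') - φ (k + (ℏ / 2) • k') + (ℏ : ℂ) * fderiv ℝ φ k k'‖
        ≤ M * (ℏ ^ 2 / 4) * ‖k'‖ ^ 2 := by
    intro k' k
    set v : EuclideanSpace ℝ (Fin 2) := (ℏ / 2) • k' with hv
    have h1 := taylor2_bound hφ hM k (-v)
    have h2 := taylor2_bound hφ hM k v
    have hlin : (ℏ : ℂ) * fderiv ℝ φ k k' =
        fderiv ℝ φ k (-v) + fderiv ℝ φ k v + (ℏ : ℂ) * fderiv ℝ φ k k' := by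
      simp
    have hv2 : fderiv ℝ φ k v = (ℏ / 2 : ℝ) • fderiv ℝ φ k k' := by
      exact (fderiv ℝ φ k).map_smul _ _
    have heq : φ (k - (ℏ / 2) • k') - φ (k + (ℏ / 2) • k') + (ℏ : ℂ) * fderiv ℝ φ k k' =
        (φ (k + (-v)) - φ k - fderiv ℝ φ k (-v)) - (φ (k + v) - φ k - fderiv ℝ φ k v) := by
      rw [sub_eq_add_neg k ((ℏ / 2) • k')]
      have : fderiv ℝ φ k (-v) = -((ℏ / 2 : ℝ) • fderiv ℝ φ k k') := by
        rw [map_neg, hv2]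
      rw [this, hv2, hv]
      push_cast [Complex.real_smul]
      ring
    rw [heq]
    have hnv : ‖v‖ ^ 2 = (ℏ / 2) ^ 2 * ‖k'‖ ^ 2 := by
      rw [hv, norm_smul, mul_pow, Real.norm_eq_abs, _root_.sq_abs]
    calc ‖(φ (k + (-v)) - φ k - fderiv ℝ φ k (-v)) - (φ (k + v) - φ k - fderiv ℝ φ k v)‖
        ≤ ‖φ (k + (-v)) - φ k - fderiv ℝ φ k (-v)‖ + ‖φ (k + v) - φ k - fderiv ℝ φ k v‖ :=
          norm_sub_le _ _
      _ ≤ M / 2 * ‖(-v)‖ ^ 2 + M / 2 * ‖v‖ ^ 2 := add_le_add h1 h2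
      _ = M * ‖v‖ ^ 2 := by rw [norm_neg]; ring
      _ = M * (ℏ ^ 2 / 4) * ‖k'‖ ^ 2 := by rw [hnv]; ring
  -- bound on the inner integral
  have hinner : ∀ k' : EuclideanSpace ℝ (Fin 2),
      ‖∫ p : EuclideanSpace ℝ (Fin 2) × EuclideanSpace ℝ (Fin 2),
          Complex.exp (Complex.I * ((inner ℝ k' p.1 : ℝ) : ℂ)) *
            g p * η p.1 * (1 / (ℏ : ℂ)) *
            (φ (p.2 - (ℏ / 2) • k') - φ (p.2 + (ℏ / 2) • k')
              + (ℏ : ℂ) * fderiv ℝ φ p.2 k')‖ ≤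
        (∫ p : EuclideanSpace ℝ (Fin 2) × EuclideanSpace ℝ (Fin 2), ‖g p‖) *
          (Cη * (ℏ / 4) * M * ‖k'‖ ^ 2) := by
    intro k'
    have hint : Integrable (fun p : EuclideanSpace ℝ (Fin 2) × EuclideanSpace ℝ (Fin 2) =>
        ‖g p‖ * (Cη * (ℏ / 4) * M * ‖k'‖ ^ 2)) := hg.norm.mul_const _
    have hpt : ∀ p : EuclideanSpace ℝ (Fin 2) × EuclideanSpace ℝ (Fin 2),
        ‖Complex.exp (Complex.I * ((inner ℝ k' p.1 : ℝ) : ℂ)) *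
            g p * η p.1 * (1 / (ℏ : ℂ)) *
            (φ (p.2 - (ℏ / 2) • k') - φ (p.2 + (ℏ / 2) • k')
              + (ℏ : ℂ) * fderiv ℝ φ p.2 k')‖ ≤ ‖g p‖ * (Cη * (ℏ / 4) * M * ‖k'‖ ^ 2) := by
      intro p
      have hexp : ‖Complex.exp (Complex.I * ((inner ℝ k' p.1 : ℝ) : ℂ))‖ = 1 := by
        rw [Complex.norm_exp]
        simp
      calc ‖Complex.exp (Complex.I * ((inner ℝ k' p.1 : ℝ) : ℂ)) *
            g p * η p.1 * (1 / (ℏ : ℂ)) *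
            (φ (p.2 - (ℏ / 2) • k') - φ (p.2 + (ℏ / 2) • k')
              + (ℏ : ℂ) * fderiv ℝ φ p.2 k')‖
          = ‖g p‖ * ‖η p.1‖ * (1 / ℏ) *
            ‖φ (p.2 - (ℏ / 2) • k') - φ (p.2 + (ℏ / 2) • k')
              + (ℏ : ℂ) * fderiv ℝ φ p.2 k'‖ := by
            simp only [norm_mul, hexp, one_mul, norm_div, norm_one,
              Complex.norm_real, Real.norm_eq_abs]
            rw [_root_.abs_of_pos hℏ]
        _ ≤ ‖g p‖ * Cη * (1 / ℏ) * (M * (ℏ ^ 2 / 4) * ‖k'‖ ^ 2) := by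
            apply mul_le_mul
            · apply mul_le_mul_of_nonneg_right
                (mul_le_mul_of_nonneg_left (hCη p.1) (norm_nonneg _))
              positivity
            · exact hrem k' p.2
            · exact norm_nonneg _
            · positivity
        _ = ‖g p‖ * (Cη * (ℏ / 4) * M * ‖k'‖ ^ 2) := by
            field_simp
    calc ‖∫ p : EuclideanSpace ℝ (Fin 2) × EuclideanSpace ℝ (Fin 2),
          Complex.exp (Complex.I * ((inner ℝ k' p.1 : ℝ) : ℂ)) *
            g p * η p.1 * (1 / (ℏ : ℂ)) *
            (φ (p.2 - (ℏ / 2) • k') - φ (p.2 + (ℏ / 2) • k')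
              + (ℏ : ℂ) * fderiv ℝ φ p.2 k')‖
        ≤ ∫ p : EuclideanSpace ℝ (Fin 2) × EuclideanSpace ℝ (Fin 2),
            ‖g p‖ * (Cη * (ℏ / 4) * M * ‖k'‖ ^ 2) :=
          norm_integral_le_of_norm_le hint (Filter.Eventually.of_forall hpt)
      _ = (∫ p : EuclideanSpace ℝ (Fin 2) × EuclideanSpace ℝ (Fin 2), ‖g p‖) *
          (Cη * (ℏ / 4) * M * ‖k'‖ ^ 2) := by rw [integral_mul_const]
  -- outer integral
  have houter : Integrable (fun k' : EuclideanSpace ℝ (Fin 2) =>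
      (‖k'‖ ^ 2 * ‖U k'‖) *
        ((∫ p : EuclideanSpace ℝ (Fin 2) × EuclideanSpace ℝ (Fin 2), ‖g p‖) *
          (Cη * (ℏ / 4) * M))) := hU.mul_const _
  have hpt2 : ∀ k' : EuclideanSpace ℝ (Fin 2),
      ‖U k' * ∫ p : EuclideanSpace ℝ (Fin 2) × EuclideanSpace ℝ (Fin 2),
          Complex.exp (Complex.I * ((inner ℝ k' p.1 : ℝ) : ℂ)) *
            g p * η p.1 * (1 / (ℏ : ℂ)) *
            (φ (p.2 - (ℏ / 2) • k') - φ (p.2 + (ℏ / 2) • k')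
              + (ℏ : ℂ) * fderiv ℝ φ p.2 k')‖ ≤
        (‖k'‖ ^ 2 * ‖U k'‖) *
          ((∫ p : EuclideanSpace ℝ (Fin 2) × EuclideanSpace ℝ (Fin 2), ‖g p‖) *
            (Cη * (ℏ / 4) * M)) := by
    intro k'
    calc ‖U k' * ∫ p : EuclideanSpace ℝ (Fin 2) × EuclideanSpace ℝ (Fin 2),
          Complex.exp (Complex.I * ((inner ℝ k' p.1 : ℝ) : ℂ)) *
            g p * η p.1 * (1 / (ℏ : ℂ)) *
            (φ (p.2 - (ℏ / 2) • k') - φ (p.2 + (ℏ / 2) • k')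
              + (ℏ : ℂ) * fderiv ℝ φ p.2 k')‖
        = ‖U k'‖ * ‖∫ p : EuclideanSpace ℝ (Fin 2) × EuclideanSpace ℝ (Fin 2),
          Complex.exp (Complex.I * ((inner ℝ k' p.1 : ℝ) : ℂ)) *
            g p * η p.1 * (1 / (ℏ : ℂ)) *
            (φ (p.2 - (ℏ / 2) • k') - φ (p.2 + (ℏ / 2) • k')
              + (ℏ : ℂ) * fderiv ℝ φ p.2 k')‖ := norm_mul _ _
      _ ≤ ‖U k'‖ * ((∫ p : EuclideanSpace ℝ (Fin 2) × EuclideanSpace ℝ (Fin 2), ‖g p‖) *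
            (Cη * (ℏ / 4) * M * ‖k'‖ ^ 2)) :=
          mul_le_mul_of_nonneg_left (hinner k') (norm_nonneg _)
      _ = (‖k'‖ ^ 2 * ‖U k'‖) *
          ((∫ p : EuclideanSpace ℝ (Fin 2) × EuclideanSpace ℝ (Fin 2), ‖g p‖) *
            (Cη * (ℏ / 4) * M)) := by ring
  calc ‖∫ k' : EuclideanSpace ℝ (Fin 2), U k' *
        ∫ p : EuclideanSpace ℝ (Fin 2) × EuclideanSpace ℝ (Fin 2),
          Complex.exp (Complex.I * ((inner ℝ k' p.1 : ℝ) : ℂ)) *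
            g p * η p.1 * (1 / (ℏ : ℂ)) *
            (φ (p.2 - (ℏ / 2) • k') - φ (p.2 + (ℏ / 2) • k')
              + (ℏ : ℂ) * fderiv ℝ φ p.2 k')‖
      ≤ ∫ k' : EuclideanSpace ℝ (Fin 2), (‖k'‖ ^ 2 * ‖U k'‖) *
          ((∫ p : EuclideanSpace ℝ (Fin 2) × EuclideanSpace ℝ (Fin 2), ‖g p‖) *
            (Cη * (ℏ / 4) * M)) :=
        norm_integral_le_of_norm_le houter (Filter.Eventually.of_forall hpt2)
    _ = (ℏ / 4) * (∫ k' : EuclideanSpace ℝ (Fin 2), ‖k'‖ ^ 2 * ‖U k'‖) *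
        (∫ p : EuclideanSpace ℝ (Fin 2) × EuclideanSpace ℝ (Fin 2), ‖g p‖) * Cη * M := by
      rw [integral_mul_const]
      ring
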